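/- If M = C(A,B) is an irreducible restricted Cauchy matrix (i.e., a_i > b_{n+2-i} for i = 2,...,n), then every (i,j)-minor M_{ij} (the matrix obtained by deleting row i and column j) is again a restricted Cauchy matrix, namely C(A',B') where A' deletes a_i from A and B' deletes b_j from B. -/
import Mathlib


/-- Every minor of an irreducible restricted Cauchy matrix is again a
restricted Cauchy matrix `C(A', B')`, where `A'` deletes `a i` and `B'` deletes `b j`. -/
theorem stmt2 (n : ℕ) (a b : Fin (n + 1) → ℝ)
    (ha : StrictAnti a) (hb : StrictMono b)
    (hab : ∀ i : Fin (n + 1), b i.rev < a i)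
    (hne : ∀ i j : Fin (n + 1), a i ≠ b j)
    (hirr : ∀ i j : Fin (n + 1), (i : ℕ) + (j : ℕ) = n + 1 → b j < a i)
    (i j : Fin (n + 1)) :
    ((Matrix.of fun i j : Fin (n + 1) => if b j < a i then (a i - b j)⁻¹ else 0).submatrix
        i.succAbove j.succAbove =
      Matrix.of fun k l : Fin n =>
        if b (j.succAbove l) < a (i.succAbove k) then
          (a (i.succAbove k) - b (j.succAbove l))⁻¹ else 0) ∧
    StrictAnti (a ∘ i.succAbove) ∧ StrictMono (b ∘ j.succAbove) ∧
    (∀ k : Fin n, b (j.succAbove k.rev) < a (i.succAbove k)) := by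
  refine ⟨rfl, ha.comp_strictMono (Fin.strictMono_succAbove i),
    hb.comp (Fin.strictMono_succAbove j), fun k => ?_⟩
  set p := i.succAbove k with hpdef
  set q := j.succAbove k.rev with hqdef
  have hp : (p : ℕ) = k ∨ (p : ℕ) = k + 1 := by
    rw [hpdef]; unfold Fin.succAbove; split <;> simp
  have hq : (q : ℕ) = (k.rev : ℕ) ∨ (q : ℕ) = (k.rev : ℕ) + 1 := by
    rw [hqdef]; unfold Fin.succAbove; split <;> simp
  have hkrev : (k.rev : ℕ) = n - (k + 1) := Fin.val_rev k
  have hk : (k : ℕ) < n := k.isLt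
  rcases Nat.lt_or_ge ((p : ℕ) + (q : ℕ)) (n + 1) with h | h
  · calc b q ≤ b p.rev := hb.monotone (by
        rw [Fin.le_def, Fin.val_rev]; omega)
      _ < a p := hab p
  · have : (p : ℕ) + (q : ℕ) = n + 1 := by omega
    exact hirr p q this
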